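/- For q ≥ 1/2 with q < 1, the achievement set E(q^n) of the geometric sequence (q, q², q³, …) equals the interval [0, q/(1−q)]. -/

import Mathlib

open Classical in
noncomputable def greedyRem (q y : ℝ) : ℕ → ℝ
  | 0 => y
  | n + 1 =>
    if q ^ (n + 1) ≤ greedyRem q y n then greedyRem q y n - q ^ (n + 1) else greedyRem q y n

def achievementSet (x : ℕ → ℝ) : Set ℝ :=
  {y | ∃ ε : ℕ → Bool, y = ∑' n, if ε n then x n else 0}

theorem stmt_12 (q : ℝ) (hq1 : 1/2 ≤ q) (hq2 : q < 1) :
    achievementSet (fun n => q ^ (n + 1)) = Set.Icc 0 (q / (1 - q)) := by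
  have hq0 : 0 ≤ q := le_trans (by norm_num) hq1
  have h1q : 0 < 1 - q := by linarith
  have hsum : Summable (fun n : ℕ => q ^ (n + 1)) := by
    simpa [pow_succ'] using (summable_geometric_of_lt_one hq0 hq2).mul_left q
  have htsum : ∑' n : ℕ, q ^ (n + 1) = q / (1 - q) := by
    simp [pow_succ', tsum_mul_left, tsum_geometric_of_lt_one hq0 hq2, div_eq_mul_inv]
  ext y
  constructor
  · rintro ⟨ε, rfl⟩
    have hnn : ∀ n : ℕ, 0 ≤ (if ε n then q ^ (n + 1) else 0) := by
      intro n; split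
      · positivity
      · exact le_refl 0
    have hle : ∀ n : ℕ, (if ε n then q ^ (n + 1) else 0) ≤ q ^ (n + 1) := by
      intro n; split
      · exact le_refl _
      · positivity
    have hs' : Summable (fun n => if ε n then q ^ (n + 1) else 0) :=
      Summable.of_nonneg_of_le hnn hle hsum
    exact ⟨tsum_nonneg hnn, htsum ▸ Summable.tsum_le_tsum hle hs' hsum⟩
  · rintro ⟨hy0, hy1⟩
    classical
    -- greedy construction
    set T : ℕ → ℝ := fun n => q ^ (n + 1) / (1 - q) with hT
    set r : ℕ → ℝ := greedyRem q y with hrdef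
    have hr0 : r 0 = y := rfl
    have hrS : ∀ n, r (n + 1) = if q ^ (n + 1) ≤ r n then r n - q ^ (n + 1) else r n := by
      intro n
      rw [hrdef]
      rw [greedyRem]
    have hinv : ∀ n, 0 ≤ r n ∧ r n ≤ T n := by
      intro n
      induction n with
      | zero =>
        refine ⟨hy0, ?_⟩
        simpa [hT, pow_one, hr0] using hy1
      | succ k ih =>
        rw [hrS k]
        have hk1 : (0:ℝ) < q ^ (k + 1) := by positivity
        split
        · constructor
          · linarith [‹q ^ (k + 1) ≤ r k›]
          · have : T k - q ^ (k + 1) = T (k + 1) := by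
              simp only [hT]
              rw [eq_div_iff h1q.ne', sub_mul, div_mul_cancel₀ _ h1q.ne']
              ring
            linarith [ih.2, this.ge]
        · refine ⟨ih.1, ?_⟩
          have hlt : r k < q ^ (k + 1) := lt_of_not_ge ‹¬ q ^ (k + 1) ≤ r k›
          have : q ^ (k + 1) ≤ T (k + 1) := by
            rw [hT]
            rw [le_div_iff₀ h1q]
            have : q ^ (k + 1) * (1 - q) ≤ q ^ (k + 1) * q := by
              apply mul_le_mul_of_nonneg_left _ (le_of_lt hk1)
              linarith
            calc q ^ (k + 1) * (1 - q) ≤ q ^ (k + 1) * q := this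
              _ = q ^ (k + 2) := by ring
          linarith
    let ε : ℕ → Bool := fun n => decide (q ^ (n + 1) ≤ r n)
    have hps : ∀ n, ∑ k ∈ Finset.range n, (if ε k then q ^ (k + 1) else 0) = y - r n := by
      intro n
      induction n with
      | zero => simp [hr0]
      | succ k ih =>
        rw [Finset.sum_range_succ, ih, hrS k]
        by_cases h : q ^ (k + 1) ≤ r k
        · simp only [ε, h]
          norm_num
          ring
        · simp [ε, h]
    have hrt : Filter.Tendsto r Filter.atTop (nhds 0) := by
      have hTz : Filter.Tendsto T Filter.atTop (nhds 0) := by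
        have := (tendsto_pow_atTop_nhds_zero_of_lt_one hq0 hq2).mul_const (q / (1 - q))
        rw [zero_mul] at this
        refine this.congr fun n => ?_
        simp only [hT]
        ring
      exact squeeze_zero (fun n => (hinv n).1) (fun n => (hinv n).2) hTz
    have hsum' : Summable (fun n => if ε n then q ^ (n + 1) else 0) := by
      refine Summable.of_nonneg_of_le ?_ ?_ hsum
      · intro n; split
        · positivity
        · exact le_refl 0
      · intro n; split
        · exact le_refl _
        · positivity
    have htend : Filter.Tendsto (fun n => ∑ k ∈ Finset.range n,
        (if ε k then q ^ (k + 1) else 0)) Filter.atTop (nhds y) := by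
      have : Filter.Tendsto (fun n => y - r n) Filter.atTop (nhds (y - 0)) :=
        (tendsto_const_nhds).sub hrt
      rw [sub_zero] at this
      exact this.congr fun n => (hps n).symm
    refine ⟨ε, ?_⟩
    exact (tendsto_nhds_unique hsum'.hasSum.tendsto_sum_nat htend).symm
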